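/- Let (Y_t)_{t≥1} be identically distributed random variables with E|Y_1/n^ε|^q ≤ C_q < ∞ for all q ≥ 1, and suppose sup_{k≥1} |k^{−1/2−ζ'/2} Σ_{t=1}^k Y_t/n^ε| = O_P(1). Then for any m with n^ε/m^{ζ'/2} → 0, sup_{k ≥ m^{1+ζ}} |(m+k)^{−1/2−ζ'} Σ_{t=m+1}^{m+k} Y_t| = o_P(1). -/

import Mathlib

open MeasureTheory Filter

/-- If the normalized partial sum suprema are `O_P(1)` and `n^ε/m^{ζ'/2} → 0`,
then `sup_{k ≥ m^{1+ζ}} |(m+k)^{−1/2−ζ'} Σ_{t=m+1}^{m+k} Y_t| = o_P(1)`. -/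
theorem stmt15 {Ω : Type*} [MeasurableSpace Ω] (P : Measure Ω)
    [IsProbabilityMeasure P]
    (Y : ℕ → ℕ → Ω → ℝ) (a : ℕ → ℝ) (ha : ∀ m, 0 < a m)
    (ζ ζ' : ℝ) (hζ : 0 < ζ) (hζ' : ζ' = ζ / (2 * (1 + ζ)))
    (hmeas : ∀ m t, Measurable (Y m t))
    (hstat : ∀ m j k : ℕ,
      P.map (fun ω => ∑ t ∈ Finset.Ico j (j + k), Y m t ω) =
        P.map (fun ω => ∑ t ∈ Finset.range k, Y m t ω))
    (hOP : ∀ δ > (0 : ℝ), ∃ Cb > (0 : ℝ), ∀ m : ℕ,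
      P {ω | ∃ k : ℕ, 1 ≤ k ∧
        Cb * (k : ℝ) ^ ((1 : ℝ) / 2 + ζ' / 2) * a m <
          |∑ t ∈ Finset.range k, Y m t ω|} ≤ ENNReal.ofReal δ)
    (hdecay : Tendsto (fun m : ℕ => a m / (m : ℝ) ^ (ζ' / 2)) atTop (nhds 0)) :
    ∀ δ > (0 : ℝ), ∀ ε' > (0 : ℝ), ∀ᶠ m : ℕ in atTop,
      P {ω | ∃ k : ℕ, (m : ℝ) ^ (1 + ζ) ≤ k ∧
        ε' * ((m : ℝ) + k) ^ ((1 : ℝ) / 2 + ζ') <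
          |∑ t ∈ Finset.Ico (m + 1) (m + 1 + k), Y m t ω|} ≤
        ENNReal.ofReal δ := by
  intro δ hδ ε' hε'
  obtain ⟨Cb, hCb, hbound⟩ := hOP δ hδ
  have hζ'pos : 0 < ζ' := by
    rw [hζ']; positivity
  have hζ'le1 : ζ' ≤ 1 := by
    rw [hζ', div_le_one (by positivity)]
    nlinarith
  have hppos : 0 < (1 : ℝ) / 2 + ζ' / 2 := by linarith
  have hple1 : (1 : ℝ) / 2 + ζ' / 2 ≤ 1 := by linarith
  have hεd : (0 : ℝ) < ε' / (4 * Cb) := by positivity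
  have hev : ∀ᶠ m : ℕ in atTop, a m / (m : ℝ) ^ (ζ' / 2) < ε' / (4 * Cb) := by
    have := hdecay.eventually (gt_mem_nhds hεd)
    filter_upwards [this] with m hm using hm
  filter_upwards [hev, eventually_ge_atTop 1] with m hm hm1
  refine le_trans (measure_mono ?_) (hbound m)
  intro ω hω
  obtain ⟨k, hk, hlt⟩ := hω
  by_contra hnot
  simp only [Set.mem_setOf_eq, not_exists, not_and, not_lt] at hnot
  -- basic numeric facts
  have hxm : (1 : ℝ) ≤ (m : ℝ) := by exact_mod_cast hm1
  have hK1 : (1 : ℝ) ≤ (k : ℝ) := by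
    refine le_trans ?_ hk
    exact Real.one_le_rpow hxm (by linarith)
  have hk1 : 1 ≤ k := by exact_mod_cast hK1
  set p : ℝ := (1 : ℝ) / 2 + ζ' / 2 with hp
  set x : ℝ := (m : ℝ)
  set K : ℝ := (k : ℝ)
  have hxpos : (0 : ℝ) < x := by linarith
  have hxK : (0 : ℝ) < x + K := by linarith
  -- split the Ico sum
  have hsplit : ∑ t ∈ Finset.Ico (m + 1) (m + 1 + k), Y m t ω =
      (∑ t ∈ Finset.range (m + 1 + k), Y m t ω) -
        ∑ t ∈ Finset.range (m + 1), Y m t ω := by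
    rw [Finset.sum_Ico_eq_sub _ (by omega)]
  have hb1 := hnot (m + 1 + k) (by omega)
  have hb2 := hnot (m + 1) (by omega)
  have hcast1 : ((m + 1 + k : ℕ) : ℝ) = x + 1 + K := by push_cast; ring
  have hcast2 : ((m + 1 : ℕ) : ℝ) = x + 1 := by push_cast; ring
  rw [hcast1] at hb1
  rw [hcast2] at hb2
  -- bound the difference
  have habs : |∑ t ∈ Finset.Ico (m + 1) (m + 1 + k), Y m t ω| ≤
      Cb * (x + 1 + K) ^ p * a m + Cb * (x + 1) ^ p * a m := by
    rw [hsplit]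
    calc |(∑ t ∈ Finset.range (m + 1 + k), Y m t ω) -
          ∑ t ∈ Finset.range (m + 1), Y m t ω|
        ≤ |∑ t ∈ Finset.range (m + 1 + k), Y m t ω| +
          |∑ t ∈ Finset.range (m + 1), Y m t ω| := abs_sub _ _
      _ ≤ Cb * (x + 1 + K) ^ p * a m + Cb * (x + 1) ^ p * a m := by
          exact add_le_add hb1 hb2
  have ham := ha m
  -- (x+1)^p ≤ (x+1+K)^p
  have h1 : (x + 1) ^ p ≤ (x + 1 + K) ^ p :=
    Real.rpow_le_rpow (by linarith) (by linarith) (le_of_lt hppos)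
  -- (x+1+K)^p ≤ 2 * (x+K)^p
  have h2 : (x + 1 + K) ^ p ≤ 2 * (x + K) ^ p := by
    have hle : x + 1 + K ≤ 2 * (x + K) := by linarith
    calc (x + 1 + K) ^ p ≤ (2 * (x + K)) ^ p :=
          Real.rpow_le_rpow (by linarith) hle (le_of_lt hppos)
      _ = 2 ^ p * (x + K) ^ p := Real.mul_rpow (by norm_num) (le_of_lt hxK)
      _ ≤ 2 * (x + K) ^ p := by
          have : (2 : ℝ) ^ p ≤ 2 ^ (1 : ℝ) :=
            Real.rpow_le_rpow_of_exponent_le (by norm_num) hple1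
          rw [Real.rpow_one] at this
          have hkp : (0 : ℝ) ≤ (x + K) ^ p := Real.rpow_nonneg (le_of_lt hxK) p
          nlinarith
  -- 4 * Cb * a m ≤ ε' * x ^ (ζ'/2)
  have hxp : (0 : ℝ) < x ^ (ζ' / 2) := Real.rpow_pos_of_pos hxpos _
  have h3 : 4 * Cb * a m ≤ ε' * x ^ (ζ' / 2) := by
    rw [div_lt_div_iff₀ hxp (by positivity)] at hm
    nlinarith
  -- x ^ (ζ'/2) ≤ (x+K) ^ (ζ'/2)
  have h4 : x ^ (ζ' / 2) ≤ (x + K) ^ (ζ' / 2) :=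
    Real.rpow_le_rpow (le_of_lt hxpos) (by linarith) (by linarith)
  -- combine
  have hfinal : |∑ t ∈ Finset.Ico (m + 1) (m + 1 + k), Y m t ω| ≤
      ε' * (x + K) ^ ((1 : ℝ) / 2 + ζ') := by
    have hkp : (0 : ℝ) ≤ (x + K) ^ p := Real.rpow_nonneg (le_of_lt hxK) p
    have step1 : Cb * (x + 1 + K) ^ p * a m + Cb * (x + 1) ^ p * a m ≤
        4 * Cb * a m * (x + K) ^ p := by
      have hsum : (x + 1 + K) ^ p + (x + 1) ^ p ≤ 4 * (x + K) ^ p := by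
        linarith
      calc Cb * (x + 1 + K) ^ p * a m + Cb * (x + 1) ^ p * a m
          = Cb * a m * ((x + 1 + K) ^ p + (x + 1) ^ p) := by ring
        _ ≤ Cb * a m * (4 * (x + K) ^ p) :=
            mul_le_mul_of_nonneg_left hsum (by positivity)
        _ = 4 * Cb * a m * (x + K) ^ p := by ring
    have step2 : 4 * Cb * a m * (x + K) ^ p ≤
        ε' * (x + K) ^ (ζ' / 2) * (x + K) ^ p := by
      refine mul_le_mul_of_nonneg_right ?_ hkp
      refine h3.trans (mul_le_mul_of_nonneg_left h4 hε'.le)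
    have step3 : ε' * (x + K) ^ (ζ' / 2) * (x + K) ^ p =
        ε' * (x + K) ^ ((1 : ℝ) / 2 + ζ') := by
      rw [mul_assoc, ← Real.rpow_add hxK]
      ring_nf
      congr 2
      rw [hp]; ring
    linarith [habs, step1, step2, step3.le, step3.ge]
  exact absurd hlt (not_lt.mpr hfinal)
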